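/- Let n be a positive integer and let P_mon ⊆ ℝ^{2n+1} be the set of (A, y, B) with A, y ∈ [0,1]^n and B ∈ [0,1] satisfying B ≥ A_j − (1 − y_j) and B ≤ ∑_{k=1}^n A_k + (1 − y_j) for every j ∈ {1,…,n}. Then P_mon equals the convex hull of F_mon, where F_mon = P_mon ∩ {0,1}^{2n+1} is the set of its 0/1 points; that is, the linear relaxation of the monotonized single-clause system is integral. -/

import Mathlib

open MeasureTheory Set

namespace MonoClause

variable {n : ℕ}

/-- truncated coordinate masses -/
noncomputable def mf (A : Fin n → ℝ) (B : ℝ) (i : ℕ) : ℝ :=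
  if h : i < n then min (A ⟨i, h⟩) B else 0

/-- partial sums capped at `B` -/
noncomputable def sg (A : Fin n → ℝ) (B : ℝ) (k : ℕ) : ℝ :=
  min B (∑ i ∈ Finset.range k, mf A B i)

variable {A : Fin n → ℝ} {B : ℝ}

lemma mf_nonneg (hA : ∀ j, 0 ≤ A j) (hB : 0 ≤ B) (i : ℕ) : 0 ≤ mf A B i := by
  unfold mf; split
  · exact le_min (hA _) hB
  · exact le_rfl

lemma mf_le_B (hB : 0 ≤ B) (i : ℕ) : mf A B i ≤ B := by
  unfold mf; split
  · exact min_le_right _ _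
  · exact hB

lemma sg_le_B : sg A B k ≤ B := min_le_left _ _

lemma sg_nonneg (hA : ∀ j, 0 ≤ A j) (hB : 0 ≤ B) (k : ℕ) : 0 ≤ sg A B k :=
  le_min hB (Finset.sum_nonneg fun i _ => mf_nonneg hA hB i)

lemma sg_mono (hA : ∀ j, 0 ≤ A j) (hB : 0 ≤ B) {k l : ℕ} (h : k ≤ l) :
    sg A B k ≤ sg A B l :=
  min_le_min le_rfl (Finset.sum_le_sum_of_subset_of_nonneg
    (Finset.range_subset_range.2 h) (fun i _ _ => mf_nonneg hA hB i))

lemma sg_succ_le (hA : ∀ j, 0 ≤ A j) (hB : 0 ≤ B) (k : ℕ) :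
    sg A B (k + 1) ≤ sg A B k + mf A B k := by
  unfold sg
  rw [Finset.sum_range_succ]
  calc min B (∑ i ∈ Finset.range k, mf A B i + mf A B k)
      ≤ min (B + mf A B k) (∑ i ∈ Finset.range k, mf A B i + mf A B k) :=
        min_le_min (le_add_of_nonneg_right (mf_nonneg hA hB k)) le_rfl
    _ = min B (∑ i ∈ Finset.range k, mf A B i) + mf A B k := min_add_add_right _ _ _

lemma mf_le_sg_succ (hA : ∀ j, 0 ≤ A j) (hB : 0 ≤ B) (k : ℕ) :
    mf A B k ≤ sg A B (k + 1) := by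
  refine le_min (mf_le_B hB k) ?_
  rw [Finset.sum_range_succ]
  exact le_add_of_nonneg_left (Finset.sum_nonneg fun i _ => mf_nonneg hA hB i)

/-- coverage -/
lemma sg_coverage (hA : ∀ j, 0 ≤ A j) (hB : 0 ≤ B) :
    ∀ (k : ℕ) (t : ℝ), 0 ≤ t → t < sg A B k →
      ∃ i < k, sg A B (i + 1) - mf A B i ≤ t ∧ t < sg A B (i + 1) := by
  intro k
  induction k with
  | zero =>
    intro t ht h
    have : sg A B 0 = 0 := by simp [sg, min_eq_right hB]
    rw [this] at h; linarith
  | succ k ih =>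
    intro t ht h
    by_cases hc : sg A B (k+1) - mf A B k ≤ t
    · exact ⟨k, Nat.lt_succ_self k, hc, h⟩
    · push_neg at hc
      have : t < sg A B k := lt_of_lt_of_le (by linarith [sg_succ_le hA hB k]) le_rfl
      obtain ⟨i, hi, h1, h2⟩ := ih t ht this
      exact ⟨i, Nat.lt_succ_of_lt hi, h1, h2⟩


/-- If some `A j > B` then the cap is reached. -/
lemma sg_eq_B (hA : ∀ j, 0 ≤ A j) (hB : 0 ≤ B) {j : Fin n} (hj : B < A j) :
    sg A B n = B := by
  have hm : mf A B (j : ℕ) = B := by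
    unfold mf
    rw [dif_pos j.isLt]
    simp only [Fin.eta]
    exact min_eq_right hj.le
  have h1 : B ≤ ∑ i ∈ Finset.range n, mf A B i := by
    calc B = mf A B (j : ℕ) := hm.symm
      _ ≤ _ := Finset.single_le_sum (fun i _ => mf_nonneg hA hB i)
          (Finset.mem_range.2 j.isLt)
  exact min_eq_left h1

/-- If the cap is not reached then `sg n` is the full sum `∑ A`. -/
lemma sg_eq_sum (hA : ∀ j, 0 ≤ A j) (hB : 0 ≤ B) (h : sg A B n < B) :
    sg A B n = ∑ k, A k := by
  have hall : ∀ j : Fin n, A j ≤ B := by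
    intro j
    by_contra hj
    push_neg at hj
    rw [sg_eq_B hA hB hj] at h
    exact lt_irrefl _ h
  have hsum : ∑ i ∈ Finset.range n, mf A B i = ∑ k, A k := by
    rw [← Fin.sum_univ_eq_sum_range (fun i => mf A B i) n]
    refine Finset.sum_congr rfl fun i _ => ?_
    unfold mf
    rw [dif_pos i.isLt]
    simp only [Fin.eta]
    exact min_eq_left (hall i)
  unfold sg at h ⊢
  rw [hsum] at h ⊢
  rcases min_choice B (∑ k, A k) with hc | hc
  · rw [hc] at h; exact absurd h (lt_irrefl _)
  · exact hc

/-- Key length bound: `B + e_j - sg n ≤ 1 - y j`. -/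
lemma key_len {y : Fin n → ℝ} (hA : ∀ j, 0 ≤ A j) (hB : 0 ≤ B) (hy : ∀ j, 0 ≤ y j ∧ y j ≤ 1)
    (hlo : ∀ j, A j - (1 - y j) ≤ B) (hhi : ∀ j, B ≤ (∑ k, A k) + (1 - y j))
    (j : Fin n) :
    B + (A j - mf A B (j : ℕ)) - sg A B n ≤ 1 - y j := by
  have hmj : mf A B (j : ℕ) = min (A j) B := by
    unfold mf; rw [dif_pos j.isLt]
  rcases le_or_gt (A j) B with hc | hc
  · have he : A j - mf A B (j : ℕ) = 0 := by rw [hmj, min_eq_left hc]; ring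
    rw [he]
    rcases lt_or_ge (sg A B n) B with hs | hs
    · have := sg_eq_sum hA hB hs
      rw [this]
      linarith [hhi j]
    · linarith [(hy j).1, (hy j).2]
  · have he : A j - mf A B (j : ℕ) = A j - B := by rw [hmj, min_eq_right hc.le]
    rw [he, sg_eq_B hA hB hc]
    linarith [hlo j]


/-! ### The rounding sets -/

/-- Set on which the `j`-th `A`-coordinate rounds to 1. -/
noncomputable def UA (A : Fin n → ℝ) (B : ℝ) (j : Fin n) : Set ℝ :=
  Set.Ico (sg A B ((j : ℕ) + 1) - mf A B (j : ℕ)) (sg A B ((j : ℕ) + 1)) ∪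
    Set.Ico B (B + (A j - mf A B (j : ℕ)))

/-- Set on which the `j`-th `z = 1 - y` coordinate rounds to 1. -/
noncomputable def UZ (A : Fin n → ℝ) (B : ℝ) (z : ℝ) : Set ℝ :=
  Set.Ico (sg A B n) (min (sg A B n + z) 1) ∪ Set.Ico 0 (sg A B n + z - 1)

lemma mf_le_A (hB : 0 ≤ B) (j : Fin n) : mf A B (j : ℕ) ≤ A j := by
  unfold mf; rw [dif_pos j.isLt]; exact min_le_left _ _

lemma mf_eq (j : Fin n) : mf A B (j : ℕ) = min (A j) B := by
  unfold mf; rw [dif_pos j.isLt]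

section Feas

variable {y : Fin n → ℝ}
variable (hA : ∀ j, 0 ≤ A j ∧ A j ≤ 1) (hy : ∀ j, 0 ≤ y j ∧ y j ≤ 1)
  (hB0 : 0 ≤ B) (hB1 : B ≤ 1)
  (hlo : ∀ j, A j - (1 - y j) ≤ B) (hhi : ∀ j, B ≤ (∑ k, A k) + (1 - y j))

include hA hy hB0 hB1 hlo hhi

lemma feas1 {t : ℝ} (ht0 : 0 ≤ t) (ht1 : t < 1) {j : Fin n}
    (h1 : t ∈ UA A B j) (h2 : t ∉ UZ A B (1 - y j)) : t ∈ Set.Ico 0 B := by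
  have hA' : ∀ j, 0 ≤ A j := fun j => (hA j).1
  rcases h1 with ⟨ha, hb⟩ | ⟨ha, hb⟩
  · exact ⟨ht0, lt_of_lt_of_le hb (sg_le_B)⟩
  · exfalso
    have he : B < A j := by
      by_contra hc
      push_neg at hc
      rw [mf_eq, min_eq_left hc] at hb
      linarith
    have hsg : sg A B n = B := sg_eq_B hA' hB0 he
    apply h2
    left
    constructor
    · rw [hsg]; exact ha
    · rw [mf_eq, min_eq_right he.le] at hb
      refine lt_min ?_ ht1
      rw [hsg]
      have := hlo j
      linarith

lemma feas2 {t : ℝ} (ht0 : 0 ≤ t) (ht1 : t < 1) {j : Fin n}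
    (hB : t ∈ Set.Ico 0 B) (h2 : t ∉ UZ A B (1 - y j)) :
    ∃ i : Fin n, t ∈ UA A B i := by
  have hA' : ∀ j, 0 ≤ A j := fun j => (hA j).1
  have htn : t < sg A B n := by
    by_contra hc
    push_neg at hc
    apply h2
    left
    refine ⟨hc, lt_min ?_ ht1⟩
    have hk := key_len hA' hB0 hy hlo hhi j
    have := mf_le_A (A := A) hB0 j
    linarith [hB.2]
  obtain ⟨i, hi, hia, hib⟩ := sg_coverage hA' hB0 n t ht0 htn
  exact ⟨⟨i, hi⟩, Or.inl ⟨hia, hib⟩⟩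

end Feas

/-! ### Measures of the rounding sets -/

lemma UA_subset (hA : ∀ j, 0 ≤ A j ∧ A j ≤ 1) (hB0 : 0 ≤ B) (hB1 : B ≤ 1) (j : Fin n) :
    UA A B j ⊆ Set.Ico 0 1 := by
  have hA' : ∀ j, 0 ≤ A j := fun j => (hA j).1
  rintro t (⟨ha, hb⟩ | ⟨ha, hb⟩)
  · refine ⟨le_trans ?_ ha, lt_of_lt_of_le hb (le_trans sg_le_B hB1)⟩
    linarith [mf_le_sg_succ hA' hB0 (j : ℕ)]
  · refine ⟨le_trans hB0 ha, ?_⟩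
    rw [mf_eq] at hb
    rcases le_or_gt (A j) B with hc | hc
    · rw [min_eq_left hc] at hb; have := (hA j).2; linarith
    · rw [min_eq_right hc.le] at hb; have := (hA j).2; linarith

lemma UZ_subset (hA : ∀ j, 0 ≤ A j) (hB0 : 0 ≤ B) (hB1 : B ≤ 1) {z : ℝ}
    (hz0 : 0 ≤ z) (hz1 : z ≤ 1) : UZ A B z ⊆ Set.Ico 0 1 := by
  rintro t (⟨ha, hb⟩ | ⟨ha, hb⟩)
  · exact ⟨le_trans (sg_nonneg hA hB0 n) ha, lt_of_lt_of_le hb (min_le_right _ _)⟩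
  · refine ⟨ha, ?_⟩
    have h1 : sg A B n ≤ 1 := le_trans sg_le_B hB1
    linarith

lemma UA_meas (j : Fin n) : MeasurableSet (UA A B j) :=
  (measurableSet_Ico).union measurableSet_Ico

lemma UZ_meas (z : ℝ) : MeasurableSet (UZ A B z) :=
  (measurableSet_Ico).union measurableSet_Ico

lemma UA_volume (hA : ∀ j, 0 ≤ A j) (hB0 : 0 ≤ B) (j : Fin n) :
    MeasureTheory.volume (UA A B j) = ENNReal.ofReal (A j) := by
  have hd : Disjoint (Set.Ico (sg A B ((j : ℕ) + 1) - mf A B (j : ℕ)) (sg A B ((j : ℕ) + 1)))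
      (Set.Ico B (B + (A j - mf A B (j : ℕ)))) := by
    rw [Set.disjoint_left]
    rintro t ⟨_, h1⟩ ⟨h2, _⟩
    have : sg A B ((j : ℕ) + 1) ≤ B := sg_le_B
    linarith
  rw [UA, MeasureTheory.measure_union hd measurableSet_Ico, Real.volume_Ico, Real.volume_Ico]
  have h1 : sg A B ((j : ℕ) + 1) - (sg A B ((j : ℕ) + 1) - mf A B (j : ℕ)) = mf A B (j : ℕ) := by
    ring
  have h2 : B + (A j - mf A B (j : ℕ)) - B = A j - mf A B (j : ℕ) := by ring
  rw [h1, h2, ← ENNReal.ofReal_add (mf_nonneg hA hB0 _) (by linarith [mf_le_A (A := A) hB0 j])]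
  congr 1
  ring

lemma UZ_volume (hA : ∀ j, 0 ≤ A j) (hB0 : 0 ≤ B) (hB1 : B ≤ 1) {z : ℝ}
    (hz0 : 0 ≤ z) (hz1 : z ≤ 1) :
    MeasureTheory.volume (UZ A B z) = ENNReal.ofReal z := by
  have hs0 : 0 ≤ sg A B n := sg_nonneg hA hB0 n
  have hs1 : sg A B n ≤ 1 := le_trans sg_le_B hB1
  have hd : Disjoint (Set.Ico (sg A B n) (min (sg A B n + z) 1))
      (Set.Ico (0:ℝ) (sg A B n + z - 1)) := by
    rw [Set.disjoint_left]
    rintro t ⟨h1, _⟩ ⟨_, h2⟩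
    linarith
  rw [UZ, MeasureTheory.measure_union hd measurableSet_Ico, Real.volume_Ico, Real.volume_Ico]
  rcases le_or_gt (sg A B n + z) 1 with hc | hc
  · rw [min_eq_left hc]
    have : ENNReal.ofReal (sg A B n + z - 1 - 0) = 0 := by
      rw [ENNReal.ofReal_eq_zero]; linarith
    rw [this, add_zero]
    congr 1; ring
  · rw [min_eq_right hc.le]
    rw [← ENNReal.ofReal_add (by linarith) (by linarith)]
    congr 1; ring


/-! ### The main construction -/

/-- The polytope. -/
def Pset (n : ℕ) : Set ((Fin n → ℝ) × (Fin n → ℝ) × ℝ) :=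
  {p | (∀ j, 0 ≤ p.1 j ∧ p.1 j ≤ 1) ∧ (∀ j, 0 ≤ p.2.1 j ∧ p.2.1 j ≤ 1) ∧
       (0 ≤ p.2.2 ∧ p.2.2 ≤ 1) ∧
       (∀ j, p.1 j - (1 - p.2.1 j) ≤ p.2.2) ∧
       (∀ j, p.2.2 ≤ (∑ k, p.1 k) + (1 - p.2.1 j))}

/-- Its set of 0/1 points. -/
def Fset (n : ℕ) : Set ((Fin n → ℝ) × (Fin n → ℝ) × ℝ) :=
  {p ∈ Pset n | (∀ j, p.1 j = 0 ∨ p.1 j = 1) ∧ (∀ j, p.2.1 j = 0 ∨ p.2.1 j = 1) ∧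
       (p.2.2 = 0 ∨ p.2.2 = 1)}

/-- The rounding map. -/
noncomputable def chi (A : Fin n → ℝ) (y : Fin n → ℝ) (B : ℝ) (t : ℝ) :
    (Fin n → ℝ) × (Fin n → ℝ) × ℝ :=
  (fun j => (UA A B j).indicator (fun _ => (1:ℝ)) t,
   fun j => 1 - (UZ A B (1 - y j)).indicator (fun _ => (1:ℝ)) t,
   (Set.Ico (0:ℝ) B).indicator (fun _ => (1:ℝ)) t)

section Main

open MeasureTheory

variable {y : Fin n → ℝ}

lemma ind_nonneg (U : Set ℝ) (t : ℝ) : 0 ≤ U.indicator (fun _ => (1:ℝ)) t := by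
  by_cases h : t ∈ U <;> simp [Set.indicator_of_mem, Set.indicator_of_notMem, h]

lemma ind_le_one (U : Set ℝ) (t : ℝ) : U.indicator (fun _ => (1:ℝ)) t ≤ 1 := by
  by_cases h : t ∈ U <;> simp [Set.indicator_of_mem, Set.indicator_of_notMem, h]

lemma ind_zero_one (U : Set ℝ) (t : ℝ) :
    U.indicator (fun _ => (1:ℝ)) t = 0 ∨ U.indicator (fun _ => (1:ℝ)) t = 1 := by
  by_cases h : t ∈ U <;> simp [Set.indicator_of_mem, Set.indicator_of_notMem, h]

/-- feasibility of the rounded point -/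
lemma chi_mem_Fset (hA : ∀ j, 0 ≤ A j ∧ A j ≤ 1) (hy : ∀ j, 0 ≤ y j ∧ y j ≤ 1)
    (hB0 : 0 ≤ B) (hB1 : B ≤ 1)
    (hlo : ∀ j, A j - (1 - y j) ≤ B) (hhi : ∀ j, B ≤ (∑ k, A k) + (1 - y j))
    {t : ℝ} (ht0 : 0 ≤ t) (ht1 : t < 1) : chi A y B t ∈ Fset n := by
  unfold chi Fset Pset
  simp only [Set.mem_setOf_eq]
  refine ⟨⟨?_, ?_, ?_, ?_, ?_⟩, ?_, ?_, ?_⟩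
  · intro j
    exact ⟨ind_nonneg _ _, ind_le_one _ _⟩
  · intro j
    have h1 := ind_nonneg (UZ A B (1 - y j)) t
    have h2 := ind_le_one (UZ A B (1 - y j)) t
    constructor <;> linarith
  · exact ⟨ind_nonneg _ _, ind_le_one _ _⟩
  · -- B ≥ A_j - (1 - y_j)
    intro j
    by_cases h1 : t ∈ UA A B j
    · by_cases h2 : t ∈ UZ A B (1 - y j)
      · have := ind_nonneg (Set.Ico (0:ℝ) B) t
        simp only [Set.indicator_of_mem h1, Set.indicator_of_mem h2]
        linarith
      · have hmem := feas1 hA hy hB0 hB1 hlo hhi ht0 ht1 h1 h2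
        simp only [Set.indicator_of_mem h1, Set.indicator_of_notMem h2,
          Set.indicator_of_mem hmem]
        norm_num
    · have := ind_nonneg (Set.Ico (0:ℝ) B) t
      have h2 := ind_le_one (UZ A B (1 - y j)) t
      have h3 := ind_nonneg (UZ A B (1 - y j)) t
      simp only [Set.indicator_of_notMem h1]
      linarith
  · -- B ≤ ∑ A + (1 - y_j)
    intro j
    have hsum0 : (0:ℝ) ≤ ∑ k, (UA A B k).indicator (fun _ => (1:ℝ)) t :=
      Finset.sum_nonneg fun k _ => ind_nonneg _ _
    by_cases hb : t ∈ Set.Ico (0:ℝ) B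
    · by_cases h2 : t ∈ UZ A B (1 - y j)
      · have := ind_le_one (Set.Ico (0:ℝ) B) t
        simp only [Set.indicator_of_mem h2]
        linarith
      · obtain ⟨i, hi⟩ := feas2 hA hy hB0 hB1 hlo hhi ht0 ht1 hb h2
        have h1 : (1:ℝ) ≤ ∑ k, (UA A B k).indicator (fun _ => (1:ℝ)) t := by
          have : (UA A B i).indicator (fun _ => (1:ℝ)) t = 1 := Set.indicator_of_mem hi _
          calc (1:ℝ) = (UA A B i).indicator (fun _ => (1:ℝ)) t := this.symm
            _ ≤ _ := Finset.single_le_sum (fun k _ => ind_nonneg (UA A B k) t)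
                (Finset.mem_univ i)
        have := ind_le_one (Set.Ico (0:ℝ) B) t
        simp only [Set.indicator_of_notMem h2]
        linarith
    · have h2 := ind_nonneg (UZ A B (1 - y j)) t
      simp only [Set.indicator_of_notMem hb]
      linarith
  · intro j; exact ind_zero_one _ _
  · intro j
    rcases ind_zero_one (UZ A B (1 - y j)) t with h | h <;>
      [right; left] <;> (rw [h]; norm_num)
  · exact ind_zero_one _ _


noncomputable def mu : Measure ℝ := volume.restrict (Set.Ico (0:ℝ) 1)

instance : IsProbabilityMeasure (mu) := by
  constructor
  rw [mu, Measure.restrict_apply_univ, Real.volume_Ico]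
  norm_num

lemma integral_ind {U : Set ℝ} (hU : MeasurableSet U) (hsub : U ⊆ Set.Ico 0 1) :
    ∫ t, U.indicator (fun _ => (1:ℝ)) t ∂mu = (volume U).toReal := by
  rw [integral_indicator_const (1:ℝ) hU, mu, measureReal_def, Measure.restrict_apply hU,
    Set.inter_eq_left.2 hsub, smul_eq_mul, mul_one]

lemma ind_integrable {U : Set ℝ} (hU : MeasurableSet U) :
    Integrable (fun t => U.indicator (fun _ => (1:ℝ)) t) mu :=
  (integrable_const (1:ℝ)).indicator hU

lemma pi_integrable {g : Fin n → ℝ → ℝ} (hg : ∀ j, Integrable (g j) mu) :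
    Integrable (fun t => fun j => g j t) mu := by
  have he : (fun t => fun j => g j t) =
      fun t => ∑ j : Fin n, Pi.single j (g j t) := by
    funext t
    funext i
    rw [Finset.sum_apply]
    simp [Pi.single_apply]
  rw [he]
  refine integrable_finset_sum _ fun j _ => ?_
  have he2 : (fun t => (Pi.single j (g j t) : Fin n → ℝ)) =
      fun t => (g j t) • (Pi.single j (1:ℝ) : Fin n → ℝ) := by
    funext t
    rw [← Pi.single_smul, smul_eq_mul, mul_one]
  rw [he2]
  exact (hg j).smul_const _

lemma chi_integrable (hA : ∀ j, 0 ≤ A j ∧ A j ≤ 1) (hy : ∀ j, 0 ≤ y j ∧ y j ≤ 1)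
    (hB0 : 0 ≤ B) (hB1 : B ≤ 1) :
    Integrable (chi A y B) mu := by
  unfold chi
  exact (pi_integrable fun j => ind_integrable (UA_meas j)).prodMk
    ((pi_integrable fun j =>
        (integrable_const (1:ℝ)).sub (ind_integrable (UZ_meas _))).prodMk
      (ind_integrable measurableSet_Ico))

lemma chi_integral (hA : ∀ j, 0 ≤ A j ∧ A j ≤ 1) (hy : ∀ j, 0 ≤ y j ∧ y j ≤ 1)
    (hB0 : 0 ≤ B) (hB1 : B ≤ 1) :
    ∫ t, chi A y B t ∂mu = (A, y, B) := by
  have hA' : ∀ j, 0 ≤ A j := fun j => (hA j).1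
  have hint := chi_integrable hA hy hB0 hB1
  have hintA : Integrable (fun t => (chi A y B t).1) mu :=
    pi_integrable fun j => ind_integrable (UA_meas j)
  have hintY : Integrable (fun t => (chi A y B t).2.1) mu :=
    pi_integrable fun j => (integrable_const (1:ℝ)).sub (ind_integrable (UZ_meas _))
  have hfst : (∫ t, chi A y B t ∂mu).1 = ∫ t, (chi A y B t).1 ∂mu := by
    have := (ContinuousLinearMap.fst ℝ (Fin n → ℝ) ((Fin n → ℝ) × ℝ)).integral_comp_comm hint
    exact this.symm
  have hsnd : (∫ t, chi A y B t ∂mu).2 = ∫ t, (chi A y B t).2 ∂mu := by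
    have := (ContinuousLinearMap.snd ℝ (Fin n → ℝ) ((Fin n → ℝ) × ℝ)).integral_comp_comm hint
    exact this.symm
  have hint2 : Integrable (fun t => (chi A y B t).2) mu :=
    hintY.prodMk (ind_integrable measurableSet_Ico)
  have hsnd1 : (∫ t, (chi A y B t).2 ∂mu).1 = ∫ t, (chi A y B t).2.1 ∂mu := by
    have := (ContinuousLinearMap.fst ℝ (Fin n → ℝ) ℝ).integral_comp_comm hint2
    exact this.symm
  have hsnd2 : (∫ t, (chi A y B t).2 ∂mu).2 = ∫ t, (chi A y B t).2.2 ∂mu := by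
    have := (ContinuousLinearMap.snd ℝ (Fin n → ℝ) ℝ).integral_comp_comm hint2
    exact this.symm
  refine Prod.ext ?_ (Prod.ext ?_ ?_)
  · rw [hfst]
    funext j
    have hj : (∫ t, (chi A y B t).1 ∂mu) j = ∫ t, (chi A y B t).1 j ∂mu := by
      have := (ContinuousLinearMap.proj (R := ℝ) (φ := fun _ : Fin n => ℝ) j).integral_comp_comm
        hintA
      exact this.symm
    rw [hj]
    show (∫ t, (UA A B j).indicator (fun _ => (1:ℝ)) t ∂mu) = A j
    rw [integral_ind (UA_meas j) (UA_subset hA hB0 hB1 j), UA_volume hA' hB0 j,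
      ENNReal.toReal_ofReal (hA j).1]
  · rw [hsnd, hsnd1]
    funext j
    have hj : (∫ t, (chi A y B t).2.1 ∂mu) j = ∫ t, (chi A y B t).2.1 j ∂mu := by
      have := (ContinuousLinearMap.proj (R := ℝ) (φ := fun _ : Fin n => ℝ) j).integral_comp_comm
        hintY
      exact this.symm
    rw [hj]
    show (∫ t, (1 - (UZ A B (1 - y j)).indicator (fun _ => (1:ℝ)) t) ∂mu) = y j
    rw [integral_sub (integrable_const 1) (ind_integrable (UZ_meas _)),
      integral_ind (UZ_meas _) (UZ_subset hA' hB0 hB1 (by linarith [(hy j).2]) (by linarith [(hy j).1])),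
      UZ_volume hA' hB0 hB1 (by linarith [(hy j).2]) (by linarith [(hy j).1]),
      ENNReal.toReal_ofReal (by linarith [(hy j).2]), integral_const]
    simp
  · rw [hsnd, hsnd2]
    show (∫ t, (Set.Ico (0:ℝ) B).indicator (fun _ => (1:ℝ)) t ∂mu) = B
    rw [integral_ind measurableSet_Ico
        (Set.Ico_subset_Ico le_rfl hB1), Real.volume_Ico,
      ENNReal.toReal_ofReal (by linarith)]
    simp


lemma Fset_finite (n : ℕ) : (Fset n).Finite := by
  have h01 : ({0, 1} : Set ℝ).Finite := (Set.finite_singleton 1).insert 0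
  have hpi : (Set.pi Set.univ fun _ : Fin n => ({0, 1} : Set ℝ)).Finite :=
    Set.Finite.pi fun _ => h01
  refine Set.Finite.subset ((hpi.prod (hpi.prod h01))) ?_
  rintro ⟨a, yv, b⟩ ⟨hp, h1, h2, h3⟩
  refine ⟨fun j _ => ?_, fun j _ => ?_, ?_⟩
  · rcases h1 j with h | h <;> [exact Or.inl h; exact Or.inr h]
  · rcases h2 j with h | h <;> [exact Or.inl h; exact Or.inr h]
  · rcases h3 with h | h <;> [exact Or.inl h; exact Or.inr h]

lemma Pset_convex (n : ℕ) : Convex ℝ (Pset n) := by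
  rintro p hp q hq a b ha hb hab
  obtain ⟨hp1, hp2, hp3, hp4, hp5⟩ := hp
  obtain ⟨hq1, hq2, hq3, hq4, hq5⟩ := hq
  simp only [Pset, Set.mem_setOf_eq, Prod.fst_add, Prod.snd_add, Prod.smul_fst,
    Prod.smul_snd, Pi.add_apply, Pi.smul_apply, smul_eq_mul] at *
  refine ⟨fun j => ⟨?_, ?_⟩, fun j => ⟨?_, ?_⟩, ⟨?_, ?_⟩, fun j => ?_, fun j => ?_⟩
  · nlinarith [(hp1 j).1, (hq1 j).1]
  · nlinarith [(hp1 j).2, (hq1 j).2]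
  · nlinarith [(hp2 j).1, (hq2 j).1]
  · nlinarith [(hp2 j).2, (hq2 j).2]
  · nlinarith [hp3.1, hq3.1]
  · nlinarith [hp3.2, hq3.2]
  · nlinarith [mul_le_mul_of_nonneg_left (hp4 j) ha, mul_le_mul_of_nonneg_left (hq4 j) hb]
  · rw [Finset.sum_add_distrib, ← Finset.mul_sum, ← Finset.mul_sum]
    nlinarith [mul_le_mul_of_nonneg_left (hp5 j) ha, mul_le_mul_of_nonneg_left (hq5 j) hb]

open MeasureTheory in
lemma mem_hull {y : Fin n → ℝ} (hA : ∀ j, 0 ≤ A j ∧ A j ≤ 1)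
    (hy : ∀ j, 0 ≤ y j ∧ y j ≤ 1) (hB0 : 0 ≤ B) (hB1 : B ≤ 1)
    (hlo : ∀ j, A j - (1 - y j) ≤ B) (hhi : ∀ j, B ≤ (∑ k, A k) + (1 - y j)) :
    (A, y, B) ∈ convexHull ℝ (Fset n) := by
  have hint := chi_integrable hA hy hB0 hB1
  have hae : ∀ᵐ t ∂mu, chi A y B t ∈ convexHull ℝ (Fset n) := by
    have h : ∀ᵐ t ∂(volume.restrict (Set.Ico (0:ℝ) 1)),
        chi A y B t ∈ convexHull ℝ (Fset n) :=
      (ae_restrict_mem measurableSet_Ico).mono fun t ht =>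
        subset_convexHull ℝ _ (chi_mem_Fset hA hy hB0 hB1 hlo hhi ht.1 ht.2)
    exact h
  have hm := (convex_convexHull ℝ (Fset n)).integral_mem
    ((Fset_finite n).isClosed_convexHull (𝕜 := ℝ)) hae hint
  rwa [chi_integral hA hy hB0 hB1] at hm

end Main

end MonoClause




/-- Integrality of the LP relaxation of the monotonized single-clause system:
the polytope `P_mon` given by `0 ≤ A_j, y_j, B ≤ 1`, `B ≥ A_j − (1 − y_j)` and
`B ≤ ∑_k A_k + (1 − y_j)` equals the convex hull of its 0/1 points. -/
theorem monotonized_polytope_integral (n : ℕ) (hn : 0 < n) :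
    let P : Set ((Fin n → ℝ) × (Fin n → ℝ) × ℝ) :=
      {p | (∀ j, 0 ≤ p.1 j ∧ p.1 j ≤ 1) ∧ (∀ j, 0 ≤ p.2.1 j ∧ p.2.1 j ≤ 1) ∧
           (0 ≤ p.2.2 ∧ p.2.2 ≤ 1) ∧
           (∀ j, p.1 j - (1 - p.2.1 j) ≤ p.2.2) ∧
           (∀ j, p.2.2 ≤ (∑ k, p.1 k) + (1 - p.2.1 j))}
    P = convexHull ℝ
      {p ∈ P | (∀ j, p.1 j = 0 ∨ p.1 j = 1) ∧ (∀ j, p.2.1 j = 0 ∨ p.2.1 j = 1) ∧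
               (p.2.2 = 0 ∨ p.2.2 = 1)} := by
  intro P
  show MonoClause.Pset n = convexHull ℝ (MonoClause.Fset n)
  apply Set.Subset.antisymm
  · rintro ⟨A, y, B⟩ ⟨hA, hy, ⟨hB0, hB1⟩, hlo, hhi⟩
    exact MonoClause.mem_hull hA hy hB0 hB1 hlo hhi
  · exact convexHull_min (fun p hp => hp.1) (MonoClause.Pset_convex n)
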